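/- Let γ = (γ₁,γ₂,γ₃) : [a,b] → ℝ³ be a Euclidean C²-smooth regular curve and t ∈ [a,b] a point with ω(γ̇(t)) = 0 and (d/dt)ω(γ̇(t)) = 0. Then for every L > 0 the curvature k^{L,∇}_γ(t) associated to the first Schouten–Van Kampen affine connection equals |γ̈₁(t)γ̇₂(t) − γ̈₂(t)γ̇₁(t)| / (γ̇₁(t)² + γ̇₂(t)²)^{3/2}; in particular its limit as L → +∞ is this value. -/

import Mathlib

open Filter Real Topology

theorem curvature_first_SvK_horizontal
    (γ₁ γ₂ γ₃ ω : ℝ → ℝ) (k : ℝ → ℝ → ℝ) (a b t : ℝ)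
    (ht : t ∈ Set.Icc a b)
    (hγ : ContDiffOn ℝ 2 (fun s => (γ₁ s, γ₂ s, γ₃ s)) (Set.Icc a b))
    (hreg : ∀ s ∈ Set.Icc a b, ¬ (deriv γ₁ s = 0 ∧ deriv γ₂ s = 0 ∧ deriv γ₃ s = 0))
    (hω : ∀ s, ω s = deriv γ₃ s + (1/2) * (γ₂ s * deriv γ₁ s - γ₁ s * deriv γ₂ s))
    (hk : ∀ L s, k L s = Real.sqrt (((deriv (deriv γ₁) s + L * ω s * deriv γ₂ s / 2)^2 + (deriv (deriv γ₂) s - L * ω s * deriv γ₁ s / 2)^2 + L * (deriv ω s)^2) / ((deriv γ₁ s)^2 + (deriv γ₂ s)^2 + L * (ω s)^2)^2 - (deriv γ₁ s * (deriv (deriv γ₁) s + L * ω s * deriv γ₂ s / 2) + deriv γ₂ s * (deriv (deriv γ₂) s - L * ω s * deriv γ₁ s / 2) + L * ω s * deriv ω s)^2 / ((deriv γ₁ s)^2 + (deriv γ₂ s)^2 + L * (ω s)^2)^3))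
    (h0 : ω t = 0) (h1 : deriv ω t = 0) :
    (∀ L > (0:ℝ), k L t = |deriv (deriv γ₁) t * deriv γ₂ t - deriv (deriv γ₂) t * deriv γ₁ t| / ((deriv γ₁ t)^2 + (deriv γ₂ t)^2) ^ ((3:ℝ)/2)) ∧
    Filter.Tendsto (fun L => k L t) Filter.atTop (nhds (|deriv (deriv γ₁) t * deriv γ₂ t - deriv (deriv γ₂) t * deriv γ₁ t| / ((deriv γ₁ t)^2 + (deriv γ₂ t)^2) ^ ((3:ℝ)/2))) := by
  set d1 := deriv γ₁ t with hd1
  set d2 := deriv γ₂ t with hd2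
  set c1 := deriv (deriv γ₁) t with hc1
  set c2 := deriv (deriv γ₂) t with hc2
  have hN : d1 ^ 2 + d2 ^ 2 > 0 := by
    rcases lt_or_eq_of_le (by positivity : (0:ℝ) ≤ d1 ^ 2 + d2 ^ 2) with h | h
    · exact h
    · exfalso
      have hz1 : d1 = 0 := by nlinarith [sq_nonneg d1, sq_nonneg d2]
      have hz2 : d2 = 0 := by nlinarith [sq_nonneg d1, sq_nonneg d2]
      have hωt := hω t
      rw [h0, ← hd1, ← hd2, hz1, hz2] at hωt
      exact hreg t ht ⟨hz1, hz2, by linarith⟩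
  have hsq : ((d1 ^ 2 + d2 ^ 2) ^ ((3:ℝ)/2)) ^ 2 = (d1 ^ 2 + d2 ^ 2) ^ 3 := by
    rw [← Real.rpow_natCast ((d1 ^ 2 + d2 ^ 2) ^ ((3:ℝ)/2)) 2, ← Real.rpow_mul hN.le,
      ← Real.rpow_natCast (d1 ^ 2 + d2 ^ 2) 3]
    norm_num
  have key : ∀ L : ℝ, k L t = |c1 * d2 - c2 * d1| / (d1 ^ 2 + d2 ^ 2) ^ ((3:ℝ)/2) := by
    intro L
    rw [hk, h0, h1, ← hd1, ← hd2, ← hc1, ← hc2]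
    have e1 : ((c1 + L * 0 * d2 / 2) ^ 2 + (c2 - L * 0 * d1 / 2) ^ 2 + L * 0 ^ 2) /
          (d1 ^ 2 + d2 ^ 2 + L * 0 ^ 2) ^ 2 -
        (d1 * (c1 + L * 0 * d2 / 2) + d2 * (c2 - L * 0 * d1 / 2) + L * 0 * 0) ^ 2 /
          (d1 ^ 2 + d2 ^ 2 + L * 0 ^ 2) ^ 3 =
        (c1 * d2 - c2 * d1) ^ 2 / (d1 ^ 2 + d2 ^ 2) ^ 3 := by
      have hN' : d1 ^ 2 + d2 ^ 2 ≠ 0 := hN.ne'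
      simp only [mul_zero, zero_mul, zero_div, add_zero, sub_zero, ne_eq, OfNat.ofNat_ne_zero,
        not_false_eq_true, zero_pow]
      rw [div_sub_div _ _ (pow_ne_zero 2 hN') (pow_ne_zero 3 hN'),
        div_eq_div_iff (mul_ne_zero (pow_ne_zero 2 hN') (pow_ne_zero 3 hN')) (pow_ne_zero 3 hN')]
      ring
    rw [e1]
    have e2 : (c1 * d2 - c2 * d1) ^ 2 / (d1 ^ 2 + d2 ^ 2) ^ 3 =
        (|c1 * d2 - c2 * d1| / (d1 ^ 2 + d2 ^ 2) ^ ((3:ℝ)/2)) ^ 2 := by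
      rw [div_pow, sq_abs, hsq]
    rw [e2, Real.sqrt_sq (by positivity)]
  refine ⟨fun L _ => key L, ?_⟩
  have : (fun L => k L t) = fun _ => |c1 * d2 - c2 * d1| / (d1 ^ 2 + d2 ^ 2) ^ ((3:ℝ)/2) :=
    funext key
  rw [this]
  exact tendsto_const_nhds
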